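/- Let ABC be a nondegenerate triangle in the Euclidean plane, and let D and Z be two points strictly between B and C with dist(B,D) < dist(B,Z). Then sin(∠BAD)·sin(∠CAZ) < sin(∠BAZ)·sin(∠CAD); that is, the ratio sin(∠BAX)/sin(∠CAX) is strictly increasing as the point X moves along the open segment from B to C. -/

import Mathlib

open EuclideanGeometry Real

set_option maxHeartbeats 1000000

section Aux

variable {V : Type*} [NormedAddCommGroup V] [InnerProductSpace ℝ V]
  [Fact (Module.finrank ℝ V = 2)] (o : Orientation ℝ V (Fin 2))

lemma sin_angle_mul_eq_abs_areaForm (x y : V) :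
    Real.sin (InnerProductGeometry.angle x y) * (‖x‖ * ‖y‖) = |o.areaForm x y| := by
  rw [InnerProductGeometry.sin_angle_mul_norm_mul_norm]
  have h := o.inner_sq_add_areaForm_sq x y
  have hxx : (inner ℝ x x : ℝ) = ‖x‖ ^ 2 := real_inner_self_eq_norm_sq x
  have hyy : (inner ℝ y y : ℝ) = ‖y‖ ^ 2 := real_inner_self_eq_norm_sq y
  have : (inner ℝ x x : ℝ) * inner ℝ y y - inner ℝ x y * inner ℝ x y = (o.areaForm x y) ^ 2 := by
    rw [hxx, hyy]; nlinarith [h]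
  rw [this, Real.sqrt_sq_eq_abs]

end Aux

/-- Strict monotonicity of the sine ratio along a side: if `ABC` is a
nondegenerate planar triangle and `D`, `Z` lie strictly between `B` and `C`
with `dist B D < dist B Z`, then
`sin(∠BAD)·sin(∠CAZ) < sin(∠BAZ)·sin(∠CAD)`. -/
theorem stmt5
    (A B C D Z : EuclideanSpace ℝ (Fin 2))
    (hABC : AffineIndependent ℝ ![A, B, C])
    (hD : Sbtw ℝ B D C) (hZ : Sbtw ℝ B Z C)
    (hDZ : dist B D < dist B Z) :
    Real.sin (∠ B A D) * Real.sin (∠ C A Z) <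
      Real.sin (∠ B A Z) * Real.sin (∠ C A D) := by
  haveI : Fact (Module.finrank ℝ (EuclideanSpace ℝ (Fin 2)) = 2) :=
    ⟨finrank_euclideanSpace_fin⟩
  let o : Orientation ℝ (EuclideanSpace ℝ (Fin 2)) (Fin 2) :=
    Module.Basis.orientation (EuclideanSpace.basisFun (Fin 2) ℝ).toBasis
  -- not collinear
  have hncol : ¬ Collinear ℝ ({A, B, C} : Set (EuclideanSpace ℝ (Fin 2))) := by
    rw [affineIndependent_iff_not_collinear_set] at hABC
    exact hABC
  have hBC : B ≠ C := by
    rintro rfl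
    exact hncol ((collinear_pair ℝ A B).subset (by intro x hx; simp at hx ⊢; tauto))
  -- parametrize D and Z
  obtain ⟨t, htI, hDt⟩ := hD.wbtw
  obtain ⟨s, hsI, hZs⟩ := hZ.wbtw
  have ht0 : t ≠ 0 := by rintro rfl; exact hD.ne_left (by simp [← hDt])
  have ht1 : t ≠ 1 := by rintro rfl; exact hD.ne_right (by simp [← hDt])
  have hs0 : s ≠ 0 := by rintro rfl; exact hZ.ne_left (by simp [← hZs])
  have hs1 : s ≠ 1 := by rintro rfl; exact hZ.ne_right (by simp [← hZs])
  have ht0' : 0 < t := lt_of_le_of_ne htI.1 (Ne.symm ht0)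
  have ht1' : t < 1 := lt_of_le_of_ne htI.2 ht1
  have hs0' : 0 < s := lt_of_le_of_ne hsI.1 (Ne.symm hs0)
  have hs1' : s < 1 := lt_of_le_of_ne hsI.2 hs1
  -- t < s
  have hts : t < s := by
    have hdD : dist B D = t * dist B C := by
      rw [← hDt, dist_comm, dist_lineMap_left, Real.norm_eq_abs, abs_of_pos ht0']
    have hdZ : dist B Z = s * dist B C := by
      rw [← hZs, dist_comm, dist_lineMap_left, Real.norm_eq_abs, abs_of_pos hs0']
    have hBCpos : 0 < dist B C := dist_pos.2 hBC
    rw [hdD, hdZ] at hDZ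
    exact lt_of_mul_lt_mul_right hDZ hBCpos.le
  -- vectors
  set u : EuclideanSpace ℝ (Fin 2) := B - A with hu
  set v : EuclideanSpace ℝ (Fin 2) := C - A with hv
  set S : ℝ := |o.areaForm u v| with hS
  -- areaForm computations
  have hDA : D - A = (1 - t) • u + t • v := by
    rw [← hDt]
    simp only [AffineMap.lineMap_apply, hu, hv, vsub_eq_sub, vadd_eq_add]
    module
  have hZA : Z - A = (1 - s) • u + s • v := by
    rw [← hZs]
    simp only [AffineMap.lineMap_apply, hu, hv, vsub_eq_sub, vadd_eq_add]
    module
  have hωD : o.areaForm u (D - A) = t * o.areaForm u v := by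
    rw [hDA]; simp [o.areaForm_apply_self]
  have hωD' : o.areaForm v (D - A) = -((1 - t) * o.areaForm u v) := by
    rw [hDA]; simp [o.areaForm_apply_self, o.areaForm_swap v u]
  have hωZ : o.areaForm u (Z - A) = s * o.areaForm u v := by
    rw [hZA]; simp [o.areaForm_apply_self]
  have hωZ' : o.areaForm v (Z - A) = -((1 - s) * o.areaForm u v) := by
    rw [hZA]; simp [o.areaForm_apply_self, o.areaForm_swap v u]
  -- positivity of S
  have hangle : ∠ B A C = InnerProductGeometry.angle u v := rfl
  have hSpos : 0 < S := by
    have h1 : 0 < ∠ B A C :=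
      EuclideanGeometry.angle_pos_of_not_collinear (by
        intro h; exact hncol (by rwa [Set.insert_comm] at h))
    have h2 : ∠ B A C < π :=
      EuclideanGeometry.angle_lt_pi_of_not_collinear (by
        intro h; exact hncol (by rwa [Set.insert_comm] at h))
    have hsinpos : 0 < Real.sin (∠ B A C) := Real.sin_pos_of_pos_of_lt_pi h1 h2
    have huv := sin_angle_mul_eq_abs_areaForm o u v
    rw [← hangle] at huv
    have hu0 : u ≠ 0 := by
      intro h
      have hBA : B = A := sub_eq_zero.mp h
      exact hncol (by
        rw [hBA]
        exact (collinear_pair ℝ A C).subset (by intro x hx; simp at hx ⊢; tauto))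
    have hv0 : v ≠ 0 := by
      intro h
      have hCA : C = A := sub_eq_zero.mp h
      exact hncol (by
        rw [hCA]
        exact (collinear_pair ℝ A B).subset (by intro x hx; simp at hx ⊢; tauto))
    have : 0 < Real.sin (∠ B A C) * (‖u‖ * ‖v‖) :=
      mul_pos hsinpos (mul_pos (norm_pos_iff.2 hu0) (norm_pos_iff.2 hv0))
    rw [huv] at this
    exact this
  -- D ≠ A, Z ≠ A
  have hDA0 : D - A ≠ 0 := by
    intro h
    have hAD : A = D := (sub_eq_zero.mp h).symm
    have hc : Collinear ℝ ({B, D, C} : Set (EuclideanSpace ℝ (Fin 2))) := hD.wbtw.collinear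
    rw [← hAD] at hc
    exact hncol (hc.subset (by intro x hx; simp at hx ⊢; tauto))
  have hZA0 : Z - A ≠ 0 := by
    intro h
    have hAZ : A = Z := (sub_eq_zero.mp h).symm
    have hc : Collinear ℝ ({B, Z, C} : Set (EuclideanSpace ℝ (Fin 2))) := hZ.wbtw.collinear
    rw [← hAZ] at hc
    exact hncol (hc.subset (by intro x hx; simp at hx ⊢; tauto))
  -- the four sine equations
  have e1 : Real.sin (∠ B A D) * (‖u‖ * ‖D - A‖) = t * S := by
    have h := sin_angle_mul_eq_abs_areaForm o u (D - A)
    have hang : ∠ B A D = InnerProductGeometry.angle u (D - A) := rfl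
    rw [hang, h, hωD, abs_mul, abs_of_pos ht0']
  have e2 : Real.sin (∠ C A D) * (‖v‖ * ‖D - A‖) = (1 - t) * S := by
    have h := sin_angle_mul_eq_abs_areaForm o v (D - A)
    have hang : ∠ C A D = InnerProductGeometry.angle v (D - A) := rfl
    rw [hang, h, hωD', abs_neg, abs_mul, abs_of_pos (by linarith)]
  have e3 : Real.sin (∠ B A Z) * (‖u‖ * ‖Z - A‖) = s * S := by
    have h := sin_angle_mul_eq_abs_areaForm o u (Z - A)
    have hang : ∠ B A Z = InnerProductGeometry.angle u (Z - A) := rfl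
    rw [hang, h, hωZ, abs_mul, abs_of_pos hs0']
  have e4 : Real.sin (∠ C A Z) * (‖v‖ * ‖Z - A‖) = (1 - s) * S := by
    have h := sin_angle_mul_eq_abs_areaForm o v (Z - A)
    have hang : ∠ C A Z = InnerProductGeometry.angle v (Z - A) := rfl
    rw [hang, h, hωZ', abs_neg, abs_mul, abs_of_pos (by linarith)]
  -- combine
  have huu : 0 < ‖u‖ := by
    refine norm_pos_iff.2 ?_
    intro h
    have hBA : B = A := sub_eq_zero.mp h
    exact hncol (by
      rw [hBA]
      exact (collinear_pair ℝ A C).subset (by intro x hx; simp at hx ⊢; tauto))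
  have hvv : 0 < ‖v‖ := by
    refine norm_pos_iff.2 ?_
    intro h
    have hCA : C = A := sub_eq_zero.mp h
    exact hncol (by
      rw [hCA]
      exact (collinear_pair ℝ A B).subset (by intro x hx; simp at hx ⊢; tauto))
  have hnD : 0 < ‖D - A‖ := norm_pos_iff.2 hDA0
  have hnZ : 0 < ‖Z - A‖ := norm_pos_iff.2 hZA0
  set K : ℝ := (‖u‖ * ‖D - A‖) * (‖v‖ * ‖Z - A‖) with hK
  have hKpos : 0 < K := mul_pos (mul_pos huu hnD) (mul_pos hvv hnZ)
  have k1 : (Real.sin (∠ B A D) * Real.sin (∠ C A Z)) * K = (t * S) * ((1 - s) * S) := by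
    rw [← e1, ← e4]; ring
  have k2 : (Real.sin (∠ B A Z) * Real.sin (∠ C A D)) * K = (s * S) * ((1 - t) * S) := by
    rw [← e3, ← e2]; ring
  have hlt : (t * S) * ((1 - s) * S) < (s * S) * ((1 - t) * S) := by
    have h2 : 0 < (s - t) * (S * S) := mul_pos (sub_pos.2 hts) (mul_pos hSpos hSpos)
    nlinarith [h2]
  rw [← k1, ← k2] at hlt
  exact (mul_lt_mul_iff_of_pos_right hKpos).mp hlt
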